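/- Let μ ∈ ℂ and σ > 0, and let Z = X + iY where X and Y are independent real Gaussian random variables with mean 0 and variance σ²/2. Then the law of |μ + Z|² is absolutely continuous with respect to Lebesgue measure on (0, ∞), with density γ ↦ (1/σ²) e^{-(γ + |μ|²)/σ²} I₀(2|μ|√γ / σ²); equivalently, setting K = |μ|²/σ² and γ̄ = |μ|² + σ², the density is the Rician SNR density f_Rice(γ; K, γ̄). -/

import Mathlib

open MeasureTheory ProbabilityTheory Real

/-- Modified Bessel function of the first kind and order zero:
`I₀(z) = ∑_{k=0}^∞ (z²/4)^k / (k!)²`. -/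
noncomputable def besselI0 (z : ℝ) : ℝ :=
  ∑' k : ℕ, (z ^ 2 / 4) ^ k / ((Nat.factorial k : ℝ)) ^ 2

/-- The Rician SNR density with Rician factor `K ≥ 0` and mean SNR `γ̄ > 0`:
`f_Rice(γ; K, γ̄) = ((1+K)/γ̄) e^{-K} e^{-(1+K)γ/γ̄} I₀(2√(K(1+K)γ/γ̄))`. -/
noncomputable def fRice (γ K γbar : ℝ) : ℝ :=
  ((1 + K) / γbar) * Real.exp (-K) * Real.exp (-(1 + K) * γ / γbar) *
    besselI0 (2 * Real.sqrt (K * (1 + K) * γ / γbar))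

namespace RicianAux

open Set
open scoped NNReal

lemma summable_aux {x : ℝ} (hx : 0 ≤ x) :
    Summable (fun k : ℕ => x ^ k / ((Nat.factorial k : ℝ)) ^ 2) := by
  refine Summable.of_nonneg_of_le (fun k => by positivity) (fun k => ?_)
    (Real.summable_pow_div_factorial x)
  have h1 : (1 : ℝ) ≤ (Nat.factorial k : ℝ) := by
    exact_mod_cast Nat.one_le_iff_ne_zero.mpr (Nat.factorial_ne_zero k)
  have h2 : (Nat.factorial k : ℝ) ≤ ((Nat.factorial k : ℝ)) ^ 2 := by nlinarith
  exact div_le_div_of_nonneg_left (by positivity) (by positivity) h2 |>.trans_eq rfl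

lemma besselI0_nonneg (z : ℝ) : 0 ≤ besselI0 z :=
  tsum_nonneg fun k => by positivity

lemma prod_odd_div_even (k : ℕ) :
    ∏ i ∈ Finset.range k, (2 * (i : ℝ) + 1) / (2 * i + 2)
      = (Nat.factorial (2 * k) : ℝ) / (4 ^ k * ((Nat.factorial k : ℝ)) ^ 2) := by
  induction k with
  | zero => simp
  | succ n ih =>
    rw [Finset.prod_range_succ, ih]
    have h1 : 2 * (n + 1) = (2 * n + 1) + 1 := by ring
    rw [h1, Nat.factorial_succ, Nat.factorial_succ]
    have h4 : (Nat.factorial (n + 1) : ℝ) = (n + 1) * Nat.factorial n := by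
      rw [Nat.factorial_succ]; push_cast; ring
    rw [h4]
    have h2 : (Nat.factorial (2 * n) : ℝ) ≠ 0 := by exact_mod_cast Nat.factorial_ne_zero _
    have h3 : (Nat.factorial n : ℝ) ≠ 0 := by exact_mod_cast Nat.factorial_ne_zero _
    push_cast
    field_simp
    ring

lemma integral_sin_pow_odd_symm (n : ℕ) :
    ∫ θ in (-π)..π, sin θ ^ (2 * n + 1) = 0 := by
  have h := intervalIntegral.integral_comp_neg (a := -π) (b := π)
    (fun θ => sin θ ^ (2 * n + 1))
  simp only [neg_neg] at h
  have h2 : ∀ x : ℝ, sin (-x) ^ (2 * n + 1) = -(sin x ^ (2 * n + 1)) := by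
    intro x; rw [Real.sin_neg]; exact Odd.neg_pow ⟨n, by ring⟩ _
  simp only [h2, intervalIntegral.integral_neg] at h
  linarith

lemma integral_sin_pow_even_symm (n : ℕ) :
    ∫ θ in (-π)..π, sin θ ^ (2 * n) = 2 * ∫ θ in (0:ℝ)..π, sin θ ^ (2 * n) := by
  have hi : ∀ a b : ℝ, IntervalIntegrable (fun θ => sin θ ^ (2 * n)) volume a b :=
    fun a b => (continuous_sin.pow _).intervalIntegrable a b
  have hsplit := intervalIntegral.integral_add_adjacent_intervals (hi (-π) 0) (hi 0 π)
  have h := intervalIntegral.integral_comp_neg (a := 0) (b := π) (fun θ => sin θ ^ (2 * n))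
  simp only [neg_zero] at h
  have h2 : ∀ x : ℝ, sin (-x) ^ (2 * n) = sin x ^ (2 * n) := by
    intro x; rw [Real.sin_neg]; exact Even.neg_pow ⟨n, by ring⟩ _
  simp only [h2] at h
  linarith

lemma integral_cos_pow_symm (n : ℕ) :
    ∫ θ in (-π)..π, cos θ ^ n = (-1 : ℝ) ^ n * ∫ θ in (-π)..π, sin θ ^ n := by
  have hper : Function.Periodic (fun θ => cos θ ^ n) (2 * π) := by
    intro x; simp [Real.cos_add_two_pi]
  have h1 : ∫ θ in (-π)..(-π + 2 * π), cos θ ^ n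
      = ∫ θ in (-(π/2))..(-(π/2) + 2 * π), cos θ ^ n :=
    hper.intervalIntegral_add_eq (-π) (-(π/2))
  rw [show -π + 2 * π = π by ring, show -(π/2) + 2 * π = π + π/2 by ring] at h1
  have h2 : ∫ u in (-π)..π, cos (u + π/2) ^ n
      = ∫ θ in (-π + π/2)..(π + π/2), cos θ ^ n :=
    intervalIntegral.integral_comp_add_right (fun θ => cos θ ^ n) (π/2)
  rw [show -π + π/2 = -(π/2) by ring] at h2
  have h3 : ∀ u : ℝ, cos (u + π/2) ^ n = (-1 : ℝ) ^ n * sin u ^ n := by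
    intro u; rw [Real.cos_add_pi_div_two, neg_pow]
  simp only [h3] at h2
  rw [h1, ← h2, intervalIntegral.integral_const_mul]

lemma integral_cos_pow_even_symm (n : ℕ) :
    ∫ θ in (-π)..π, cos θ ^ (2 * n)
      = 2 * π * ((Nat.factorial (2 * n) : ℝ) / (4 ^ n * ((Nat.factorial n : ℝ)) ^ 2)) := by
  rw [integral_cos_pow_symm, integral_sin_pow_even_symm, integral_sin_pow_even,
    ← RicianAux.prod_odd_div_even]
  rw [Even.neg_one_pow ⟨n, by ring⟩]
  ring

lemma integral_cos_pow_odd_symm (n : ℕ) :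
    ∫ θ in (-π)..π, cos θ ^ (2 * n + 1) = 0 := by
  rw [integral_cos_pow_symm, integral_sin_pow_odd_symm, mul_zero]

lemma integral_exp_cos (c : ℝ) :
    ∫ θ in Ioc (-π) π, Real.exp (c * cos θ) = 2 * π * besselI0 c := by
  have hpi : (-π : ℝ) ≤ π := by linarith [Real.pi_pos]
  have hexp : ∀ θ : ℝ, Real.exp (c * cos θ)
      = ∑' n : ℕ, (c ^ n / (Nat.factorial n : ℝ)) * cos θ ^ n := by
    intro θ
    rw [Real.exp_eq_exp_ℝ, NormedSpace.exp_eq_tsum_div]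
    exact tsum_congr fun n => by rw [mul_pow]; ring
  simp only [hexp]
  have hmeas : ∀ n : ℕ, AEStronglyMeasurable
      (fun θ : ℝ => (c ^ n / (Nat.factorial n : ℝ)) * cos θ ^ n)
      (volume.restrict (Ioc (-π) π)) := by
    intro n
    exact ((continuous_const.mul (continuous_cos.pow n))).aestronglyMeasurable
  have hbound : ∑' n : ℕ, ∫⁻ θ in Ioc (-π) π,
      ‖(c ^ n / (Nat.factorial n : ℝ)) * cos θ ^ n‖₊ ≠ ⊤ := by
    have hle : ∀ n : ℕ, (∫⁻ θ in Ioc (-π) π,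
        ‖(c ^ n / (Nat.factorial n : ℝ)) * cos θ ^ n‖₊)
        ≤ ENNReal.ofReal ((|c| ^ n / (Nat.factorial n : ℝ)) * (2 * π)) := by
      intro n
      have h1 : ∀ θ : ℝ, (‖(c ^ n / (Nat.factorial n : ℝ)) * cos θ ^ n‖₊ : ENNReal)
          ≤ ENNReal.ofReal (|c| ^ n / (Nat.factorial n : ℝ)) := by
        intro θ
        rw [← enorm_eq_nnnorm, ← ofReal_norm]
        apply ENNReal.ofReal_le_ofReal
        rw [norm_mul, norm_div, norm_pow, norm_pow]
        simp only [Real.norm_eq_abs, Nat.abs_cast, abs_abs]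
        have : |cos θ| ^ n ≤ 1 := pow_le_one₀ (abs_nonneg _) (Real.abs_cos_le_one θ)
        calc |c| ^ n / (Nat.factorial n : ℝ) * |cos θ| ^ n
            ≤ |c| ^ n / (Nat.factorial n : ℝ) * 1 :=
              mul_le_mul_of_nonneg_left this (by positivity)
          _ = |c| ^ n / (Nat.factorial n : ℝ) := mul_one _
      calc (∫⁻ θ in Ioc (-π) π, ‖(c ^ n / (Nat.factorial n : ℝ)) * cos θ ^ n‖₊)
          ≤ ∫⁻ _ in Ioc (-π) π, ENNReal.ofReal (|c| ^ n / (Nat.factorial n : ℝ)) :=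
            lintegral_mono fun θ => h1 θ
        _ = ENNReal.ofReal (|c| ^ n / (Nat.factorial n : ℝ)) * volume (Ioc (-π) π) := by
            rw [setLIntegral_const]
        _ = ENNReal.ofReal ((|c| ^ n / (Nat.factorial n : ℝ)) * (2 * π)) := by
            rw [Real.volume_Ioc, ← ENNReal.ofReal_mul (by positivity)]
            congr 1; ring
    have hsum : Summable (fun n : ℕ => (|c| ^ n / (Nat.factorial n : ℝ)) * (2 * π)) :=
      (Real.summable_pow_div_factorial |c|).mul_right _
    exact ne_top_of_le_ne_top ENNReal.ofReal_ne_top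
      ((ENNReal.tsum_le_tsum hle).trans_eq
        (ENNReal.ofReal_tsum_of_nonneg (fun n => by positivity) hsum).symm)
  rw [MeasureTheory.integral_tsum hmeas hbound]
  have hterm : ∀ n : ℕ, ∫ θ in Ioc (-π) π, (c ^ n / (Nat.factorial n : ℝ)) * cos θ ^ n
      = (c ^ n / (Nat.factorial n : ℝ)) * ∫ θ in (-π)..π, cos θ ^ n := by
    intro n
    rw [MeasureTheory.integral_const_mul, intervalIntegral.integral_of_le hpi]
  simp only [hterm]
  have heval : ∀ n : ℕ, (fun n => (c ^ n / (Nat.factorial n : ℝ)) * ∫ θ in (-π)..π, cos θ ^ n)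
      = fun n => (c ^ n / (Nat.factorial n : ℝ)) * ∫ θ in (-π)..π, cos θ ^ n := fun _ => rfl
  set f : ℕ → ℝ := fun n => (c ^ n / (Nat.factorial n : ℝ)) * ∫ θ in (-π)..π, cos θ ^ n with hf
  have hfeven : ∀ k : ℕ, f (2 * k) = 2 * π * ((c ^ 2 / 4) ^ k / ((Nat.factorial k : ℝ)) ^ 2) := by
    intro k
    rw [hf]
    simp only
    rw [integral_cos_pow_even_symm k]
    have h2k : (Nat.factorial (2 * k) : ℝ) ≠ 0 := by exact_mod_cast Nat.factorial_ne_zero _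
    rw [pow_mul]
    rw [div_pow]
    field_simp
  have hfodd : ∀ k : ℕ, f (2 * k + 1) = 0 := by
    intro k
    rw [hf]; simp only
    rw [integral_cos_pow_odd_symm k, mul_zero]
  have hsume : Summable (fun k => f (2 * k)) := by
    simp only [hfeven]
    exact (summable_aux (by positivity : (0:ℝ) ≤ c ^ 2 / 4)).mul_left _
  have hsumo : Summable (fun k => f (2 * k + 1)) := by
    simp only [hfodd]; exact summable_zero
  have := tsum_even_add_odd hsume hsumo
  rw [← this]
  simp only [hfodd, hfeven, tsum_zero, add_zero]
  rw [tsum_mul_left]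
  rfl

lemma integral_exp_cos_sin (p q : ℝ) :
    ∫ θ in Ioc (-π) π, Real.exp (p * cos θ + q * sin θ)
      = 2 * π * besselI0 (Real.sqrt (p ^ 2 + q ^ 2)) := by
  have hpi : (-π : ℝ) ≤ π := by linarith [Real.pi_pos]
  set R : ℝ := Real.sqrt (p ^ 2 + q ^ 2) with hR
  rcases eq_or_ne (p ^ 2 + q ^ 2) 0 with h0 | h0
  · have hp : p = 0 := by nlinarith [sq_nonneg p, sq_nonneg q]
    have hq : q = 0 := by nlinarith [sq_nonneg p, sq_nonneg q]
    subst hp; subst hq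
    simp only [zero_mul, add_zero, Real.exp_zero]
    rw [hR]
    norm_num
    rw [← integral_exp_cos 0]
    simp
  · set z : ℂ := ⟨p, q⟩ with hz
    have hzne : z ≠ 0 := by
      simp only [hz, ne_eq, Complex.ext_iff, Complex.zero_re, Complex.zero_im, not_and]
      intro hp hq
      exact absurd (by rw [hp, hq]; ring) h0
    have habs : ‖z‖ = R := by
      rw [Complex.norm_def, Complex.normSq_apply, hR]
      norm_num
      simp only [hz, sq]
    have hRpos : 0 < R := by
      rw [← habs]; exact norm_pos_iff.mpr hzne
    set φ : ℝ := Complex.arg z with hφ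
    have hcos : p = R * Real.cos φ := by
      rw [hφ, Complex.cos_arg hzne, habs]
      field_simp
      rfl
    have hsin : q = R * Real.sin φ := by
      rw [hφ, Complex.sin_arg, habs]
      field_simp
      rfl
    have hkey : ∀ θ : ℝ, p * cos θ + q * sin θ = R * cos (θ - φ) := by
      intro θ
      rw [Real.cos_sub, hcos, hsin]; ring
    simp only [hkey]
    rw [← intervalIntegral.integral_of_le hpi]
    have h1 : ∫ θ in (-π)..π, Real.exp (R * cos (θ - φ))
        = ∫ θ in (-π - φ)..(π - φ), Real.exp (R * cos θ) :=
      intervalIntegral.integral_comp_sub_right (fun θ => Real.exp (R * cos θ)) φ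
    have hper : Function.Periodic (fun θ => Real.exp (R * cos θ)) (2 * π) := by
      intro x; simp [Real.cos_add_two_pi]
    have h2 : ∫ θ in (-π - φ)..(-π - φ + 2 * π), Real.exp (R * cos θ)
        = ∫ θ in (-π)..(-π + 2 * π), Real.exp (R * cos θ) :=
      hper.intervalIntegral_add_eq (-π - φ) (-π)
    rw [show -π - φ + 2 * π = π - φ by ring, show -π + 2 * π = π by ring] at h2
    rw [h1, h2, intervalIntegral.integral_of_le hpi, integral_exp_cos]

lemma lintegral_exp_cos_sin (p q : ℝ) :
    ∫⁻ θ in Ioo (-π) π, ENNReal.ofReal (Real.exp (p * cos θ + q * sin θ))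
      = ENNReal.ofReal (2 * π * besselI0 (Real.sqrt (p ^ 2 + q ^ 2))) := by
  rw [← integral_exp_cos_sin p q]
  rw [Measure.restrict_congr_set Ioo_ae_eq_Ioc]
  refine (MeasureTheory.ofReal_integral_eq_lintegral_ofReal ?_ ?_).symm
  · apply Continuous.integrableOn_Ioc
    exact Real.continuous_exp.comp ((continuous_const.mul continuous_cos).add
      (continuous_const.mul continuous_sin))
  · exact Filter.Eventually.of_forall fun θ => (Real.exp_pos _).le

lemma lintegral_comp_polarCoord_symm (g : ℝ × ℝ → ENNReal) :
    ∫⁻ p, g p = ∫⁻ p in polarCoord.target, ENNReal.ofReal p.1 * g (polarCoord.symm p) := by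
  set B : ℝ × ℝ → ℝ × ℝ →L[ℝ] ℝ × ℝ := fun p =>
    LinearMap.toContinuousLinearMap (Matrix.toLin (Module.Basis.finTwoProd ℝ) (Module.Basis.finTwoProd ℝ)
      !![cos p.2, -p.1 * sin p.2; sin p.2, p.1 * cos p.2]) with hB
  have A : ∀ p ∈ polarCoord.target, HasFDerivWithinAt polarCoord.symm (B p) polarCoord.target p :=
    fun p _ => (hasFDerivAt_polarCoord_symm p).hasFDerivWithinAt
  have B_det : ∀ p, (B p).det = p.1 := by
    intro p
    conv_rhs => rw [← one_mul p.1, ← cos_sq_add_sin_sq p.2]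
    simp only [hB, neg_mul, LinearMap.det_toContinuousLinearMap, LinearMap.det_toLin,
      Matrix.det_fin_two_of, sub_neg_eq_add]
    ring
  have hinj : InjOn polarCoord.symm polarCoord.target := polarCoord.symm.injOn
  have himg : polarCoord.symm '' polarCoord.target = polarCoord.source :=
    polarCoord.symm_image_target_eq_source
  have h := lintegral_image_eq_lintegral_abs_det_fderiv_mul volume
    polarCoord.open_target.measurableSet A hinj g
  rw [himg] at h
  have hsrc : ∫⁻ p in polarCoord.source, g p = ∫⁻ p, g p := by
    conv_rhs => rw [← setLIntegral_univ g]
    exact setLIntegral_congr polarCoord_source_ae_eq_univ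
  rw [← hsrc, h]
  refine setLIntegral_congr_fun polarCoord.open_target.measurableSet
    (fun p hp => ?_)
  rw [B_det, abs_of_pos hp.1]

lemma key_lintegral (a b vr : ℝ) (hv : 0 < vr) (s : Set ℝ) (hs : MeasurableSet s) :
    ∫⁻ p : ℝ × ℝ in (fun p : ℝ × ℝ => (a + p.1) ^ 2 + (b + p.2) ^ 2) ⁻¹' s,
        (ENNReal.ofReal ((Real.sqrt (2 * π * vr))⁻¹ * Real.exp (-(p.1 - 0) ^ 2 / (2 * vr)))
        * ENNReal.ofReal ((Real.sqrt (2 * π * vr))⁻¹ * Real.exp (-(p.2 - 0) ^ 2 / (2 * vr))))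
    = ∫⁻ γ in s, (Ioi (0:ℝ)).indicator
        (fun γ => ENNReal.ofReal ((2 * vr)⁻¹ * Real.exp (-(γ + (a ^ 2 + b ^ 2)) / (2 * vr))
          * besselI0 (Real.sqrt (a ^ 2 + b ^ 2) * Real.sqrt γ / vr))) γ := by
  have hπ := Real.pi_pos
  set m2 : ℝ := a ^ 2 + b ^ 2 with hm2
  have hm2nn : 0 ≤ m2 := by positivity
  set g : ℝ → ENNReal := (s.indicator (fun _ => (1 : ENNReal))) with hgdef
  have hgmeas : Measurable g := measurable_const.indicator hs
  have hgfin : ∀ x, g x ≠ ⊤ := by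
    intro x
    by_cases h : x ∈ s <;> simp [hgdef, Set.indicator_of_mem, Set.indicator_of_notMem, h]
  set c₀ : ℝ := (2 * π * vr)⁻¹ with hc₀
  have hc₀nn : 0 ≤ c₀ := by positivity
  set dens : ℝ → ℝ := fun γ => (2 * vr)⁻¹ * Real.exp (-(γ + m2) / (2 * vr))
          * besselI0 (Real.sqrt m2 * Real.sqrt γ / vr) with hdens
  have hdensnn : ∀ γ, 0 ≤ dens γ := by
    intro γ
    have := besselI0_nonneg (Real.sqrt m2 * Real.sqrt γ / vr)
    rw [hdens]
    positivity
  set Φ : ℝ × ℝ → ENNReal := fun q => g (q.1 ^ 2)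
      * (ENNReal.ofReal q.1 * ENNReal.ofReal (c₀ * Real.exp (-(q.1 ^ 2 + m2) / (2 * vr)))
        * ENNReal.ofReal (Real.exp (q.1 * a / vr * cos q.2 + q.1 * b / vr * sin q.2)))
      with hΦ
  -- Step 0 : rewrite LHS as a full-space lintegral
  have step0 : ∫⁻ p : ℝ × ℝ in (fun p : ℝ × ℝ => (a + p.1) ^ 2 + (b + p.2) ^ 2) ⁻¹' s,
        (ENNReal.ofReal ((Real.sqrt (2 * π * vr))⁻¹ * Real.exp (-(p.1 - 0) ^ 2 / (2 * vr)))
        * ENNReal.ofReal ((Real.sqrt (2 * π * vr))⁻¹ * Real.exp (-(p.2 - 0) ^ 2 / (2 * vr))))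
      = ∫⁻ p : ℝ × ℝ, g ((a + p.1) ^ 2 + (b + p.2) ^ 2)
          * ENNReal.ofReal (c₀ * Real.exp (-(p.1 ^ 2 + p.2 ^ 2) / (2 * vr))) := by
    have hFmeas : Measurable (fun p : ℝ × ℝ => (a + p.1) ^ 2 + (b + p.2) ^ 2) := by fun_prop
    rw [← lintegral_indicator (hFmeas hs)]
    refine lintegral_congr fun p => ?_
    have hsq : Real.sqrt (2 * π * vr) * Real.sqrt (2 * π * vr) = 2 * π * vr :=
      Real.mul_self_sqrt (by positivity)
    have hprod : ENNReal.ofReal ((Real.sqrt (2 * π * vr))⁻¹ * Real.exp (-(p.1 - 0) ^ 2 / (2 * vr)))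
        * ENNReal.ofReal ((Real.sqrt (2 * π * vr))⁻¹ * Real.exp (-(p.2 - 0) ^ 2 / (2 * vr)))
        = ENNReal.ofReal (c₀ * Real.exp (-(p.1 ^ 2 + p.2 ^ 2) / (2 * vr))) := by
      rw [← ENNReal.ofReal_mul (by positivity)]
      congr 1
      have hmm : ((Real.sqrt (2 * π * vr))⁻¹ * Real.exp (-(p.1 - 0) ^ 2 / (2 * vr)))
          * ((Real.sqrt (2 * π * vr))⁻¹ * Real.exp (-(p.2 - 0) ^ 2 / (2 * vr)))
          = ((Real.sqrt (2 * π * vr) * Real.sqrt (2 * π * vr))⁻¹)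
            * Real.exp ((-(p.1 - 0) ^ 2 / (2 * vr)) + (-(p.2 - 0) ^ 2 / (2 * vr))) := by
        rw [Real.exp_add, mul_inv]; ring
      rw [hmm, hsq]
      congr 2
      ring
    by_cases h : (a + p.1) ^ 2 + (b + p.2) ^ 2 ∈ s
    · rw [Set.indicator_of_mem (by simpa using h), hgdef,
        Set.indicator_of_mem h, one_mul, hprod]
    · rw [Set.indicator_of_notMem (by simpa using h), hgdef,
        Set.indicator_of_notMem h, zero_mul]
  -- Step 1 : translation
  have step1 : ∫⁻ p : ℝ × ℝ, g ((a + p.1) ^ 2 + (b + p.2) ^ 2)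
          * ENNReal.ofReal (c₀ * Real.exp (-(p.1 ^ 2 + p.2 ^ 2) / (2 * vr)))
      = ∫⁻ p : ℝ × ℝ, g (p.1 ^ 2 + p.2 ^ 2)
          * ENNReal.ofReal (c₀ * Real.exp (-((p.1 - a) ^ 2 + (p.2 - b) ^ 2) / (2 * vr))) := by
    rw [← lintegral_add_right_eq_self (fun p : ℝ × ℝ => g (p.1 ^ 2 + p.2 ^ 2)
      * ENNReal.ofReal (c₀ * Real.exp (-((p.1 - a) ^ 2 + (p.2 - b) ^ 2) / (2 * vr)))) ((a, b) : ℝ × ℝ)]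
    refine lintegral_congr fun p => ?_
    simp only [Prod.fst_add, Prod.snd_add]
    have e1 : (p.1 + a) ^ 2 + (p.2 + b) ^ 2 = (a + p.1) ^ 2 + (b + p.2) ^ 2 := by ring
    have e2 : -((p.1 + a - a) ^ 2 + (p.2 + b - b) ^ 2) = -(p.1 ^ 2 + p.2 ^ 2) := by ring
    rw [e1, e2]
  -- Step 2 : polar coordinates
  have step2 : ∫⁻ p : ℝ × ℝ, g (p.1 ^ 2 + p.2 ^ 2)
          * ENNReal.ofReal (c₀ * Real.exp (-((p.1 - a) ^ 2 + (p.2 - b) ^ 2) / (2 * vr)))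
      = ∫⁻ q in polarCoord.target, Φ q := by
    rw [lintegral_comp_polarCoord_symm]
    refine setLIntegral_congr_fun polarCoord.open_target.measurableSet
      (fun q hq => ?_)
    rw [polarCoord_symm_apply]
    have e1 : (q.1 * cos q.2) ^ 2 + (q.1 * sin q.2) ^ 2 = q.1 ^ 2 := by
      rw [mul_pow, mul_pow, ← mul_add, cos_sq_add_sin_sq, mul_one]
    have e2 : c₀ * Real.exp (-((q.1 * cos q.2 - a) ^ 2 + (q.1 * sin q.2 - b) ^ 2) / (2 * vr))
        = (c₀ * Real.exp (-(q.1 ^ 2 + m2) / (2 * vr)))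
          * Real.exp (q.1 * a / vr * cos q.2 + q.1 * b / vr * sin q.2) := by
      rw [mul_assoc, ← Real.exp_add]
      congr 2
      have hone : cos q.2 ^ 2 + sin q.2 ^ 2 = 1 := cos_sq_add_sin_sq q.2
      field_simp
      linear_combination (-(q.1 ^ 2)) * hone
    simp only
    rw [e1, e2, ENNReal.ofReal_mul (by positivity)]
    rw [hΦ]
    simp only
    ring
  -- Step 3 : Tonelli
  have hΦmeas : Measurable Φ := by
    apply Measurable.mul
    · exact hgmeas.comp ((measurable_fst.pow_const 2))
    · apply Measurable.fun_mul
      · apply Measurable.fun_mul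
        · exact ENNReal.measurable_ofReal.comp measurable_fst
        · exact ENNReal.measurable_ofReal.comp (by fun_prop)
      · exact ENNReal.measurable_ofReal.comp (by fun_prop)
  have step3 : ∫⁻ q in polarCoord.target, Φ q
      = ∫⁻ r in Ioi (0:ℝ), ∫⁻ θ in Ioo (-π) π, Φ (r, θ) := by
    rw [polarCoord_target, Measure.volume_eq_prod, ← Measure.prod_restrict,
      MeasureTheory.lintegral_prod _ hΦmeas.aemeasurable]
  -- Step 4 : the angular integral
  have step4 : ∀ r : ℝ, ∫⁻ θ in Ioo (-π) π, Φ (r, θ)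
      = g (r ^ 2) * (ENNReal.ofReal r * ENNReal.ofReal (c₀ * Real.exp (-(r ^ 2 + m2) / (2 * vr)))
          * ENNReal.ofReal (2 * π * besselI0 (Real.sqrt ((r * a / vr) ^ 2 + (r * b / vr) ^ 2)))) := by
    intro r
    have hpt : ∀ θ : ℝ, Φ (r, θ)
        = (g (r ^ 2) * (ENNReal.ofReal r * ENNReal.ofReal (c₀ * Real.exp (-(r ^ 2 + m2) / (2 * vr)))))
          * ENNReal.ofReal (Real.exp (r * a / vr * cos θ + r * b / vr * sin θ)) := by
      intro θ
      rw [hΦ]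
      simp only
      ring
    rw [lintegral_congr hpt, lintegral_const_mul' _ _
      (ENNReal.mul_ne_top (hgfin _) (ENNReal.mul_ne_top ENNReal.ofReal_ne_top ENNReal.ofReal_ne_top)),
      lintegral_exp_cos_sin]
    ring
  rw [step0, step1, step2, step3, lintegral_congr step4]
  -- Right-hand side manipulations
  have hR1 : ∫⁻ γ in s, (Ioi (0:ℝ)).indicator (fun γ => ENNReal.ofReal (dens γ)) γ
      = ∫⁻ γ in Ioi (0:ℝ), g γ * ENNReal.ofReal (dens γ) := by
    rw [← lintegral_indicator hs, ← lintegral_indicator measurableSet_Ioi]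
    refine lintegral_congr fun γ => ?_
    by_cases h1 : γ ∈ s <;> by_cases h2 : γ ∈ Ioi (0:ℝ) <;>
      simp [hgdef, Set.indicator_of_mem, Set.indicator_of_notMem, h1, h2]
  -- 1-dim change of variables γ = r ^ 2
  have himg : (fun r : ℝ => r ^ 2) '' (Ioi 0) = Ioi (0:ℝ) := by
    ext γ
    constructor
    · rintro ⟨r, hr, rfl⟩
      exact pow_pos (Set.mem_Ioi.1 hr) 2
    · intro hγ
      exact ⟨Real.sqrt γ, Real.sqrt_pos.2 hγ, Real.sq_sqrt hγ.le⟩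
  have hderiv : ∀ x ∈ Ioi (0:ℝ), HasFDerivWithinAt (fun r : ℝ => r ^ 2)
      ((1 : ℝ →L[ℝ] ℝ).smulRight (2 * x)) (Ioi 0) x := by
    intro x _
    have h := (hasDerivAt_pow 2 x).hasDerivWithinAt (s := Ioi 0)
    norm_num at h
    exact h.hasFDerivWithinAt
  have hinj : InjOn (fun r : ℝ => r ^ 2) (Ioi 0) := by
    intro x hx y hy h
    simp only [mem_Ioi] at hx hy
    have h0 : (x - y) * (x + y) = 0 := by simp only at h; nlinarith
    rcases mul_eq_zero.1 h0 with h' | h'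
    · linarith
    · linarith
  have hR2 : ∫⁻ γ in Ioi (0:ℝ), g γ * ENNReal.ofReal (dens γ)
      = ∫⁻ r in Ioi (0:ℝ), ENNReal.ofReal |2 * r|
          * (g (r ^ 2) * ENNReal.ofReal (dens (r ^ 2))) := by
    have h := lintegral_image_eq_lintegral_abs_det_fderiv_mul volume measurableSet_Ioi hderiv hinj
      (fun γ => g γ * ENNReal.ofReal (dens γ))
    rw [himg] at h
    rw [h]
    refine lintegral_congr fun r => ?_
    rw [ContinuousLinearMap.smulRight_one_eq_toSpanSingleton, ContinuousLinearMap.det_toSpanSingleton]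
  rw [hR1, hR2]
  -- final pointwise identification
  refine setLIntegral_congr_fun measurableSet_Ioi (fun r hr => ?_)
  have hr0 : (0:ℝ) < r := hr
  have hb : Real.sqrt ((r * a / vr) ^ 2 + (r * b / vr) ^ 2) = Real.sqrt m2 * r / vr := by
    have e : (r * a / vr) ^ 2 + (r * b / vr) ^ 2 = (r / vr) ^ 2 * m2 := by
      rw [hm2]; field_simp
    rw [e, Real.sqrt_mul (sq_nonneg _), Real.sqrt_sq (by positivity : (0:ℝ) ≤ r / vr)]
    ring
  have hdr : dens (r ^ 2) = (2 * vr)⁻¹ * Real.exp (-(r ^ 2 + m2) / (2 * vr))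
      * besselI0 (Real.sqrt m2 * r / vr) := by
    rw [hdens]
    simp only
    rw [Real.sqrt_sq hr0.le]
  rw [hb, hdr, abs_of_pos (by linarith : (0:ℝ) < 2 * r)]
  have hbnn := besselI0_nonneg (Real.sqrt m2 * r / vr)
  rw [← ENNReal.ofReal_mul (by positivity : (0:ℝ) ≤ r),
      ← ENNReal.ofReal_mul (by positivity : (0:ℝ) ≤ r * (c₀ * Real.exp (-(r ^ 2 + m2) / (2 * vr))))]
  rw [show ENNReal.ofReal (2 * r) * (g (r ^ 2) * ENNReal.ofReal ((2 * vr)⁻¹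
        * Real.exp (-(r ^ 2 + m2) / (2 * vr)) * besselI0 (Real.sqrt m2 * r / vr)))
      = g (r ^ 2) * (ENNReal.ofReal (2 * r) * ENNReal.ofReal ((2 * vr)⁻¹
        * Real.exp (-(r ^ 2 + m2) / (2 * vr)) * besselI0 (Real.sqrt m2 * r / vr))) by ring]
  rw [← ENNReal.ofReal_mul (by positivity : (0:ℝ) ≤ 2 * r)]
  congr 1
  congr 1
  rw [hc₀]
  field_simp

lemma gaussian_prod_eq (v : ℝ≥0) (hv : v ≠ 0) :
    (gaussianReal 0 v).prod (gaussianReal 0 v)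
      = (volume : Measure (ℝ × ℝ)).withDensity
          (fun p => gaussianPDF 0 v p.1 * gaussianPDF 0 v p.2) := by
  rw [Measure.volume_eq_prod]
  refine Measure.prod_eq fun s t hs ht => ?_
  rw [withDensity_apply _ (hs.prod ht), ← Measure.prod_restrict,
    lintegral_prod_mul (measurable_gaussianPDF 0 v).aemeasurable
      (measurable_gaussianPDF 0 v).aemeasurable,
    gaussianReal_apply 0 hv s, gaussianReal_apply 0 hv t]

end RicianAux

open RicianAux in
theorem rician_snr_density
    {Ω : Type*} [MeasurableSpace Ω] (P : Measure Ω) [IsProbabilityMeasure P]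
    (μ : ℂ) (σ : ℝ) (hσ : 0 < σ)
    (X Y : Ω → ℝ) (hX : Measurable X) (hY : Measurable Y)
    (hlawX : P.map X = gaussianReal 0 (Real.toNNReal (σ ^ 2 / 2)))
    (hlawY : P.map Y = gaussianReal 0 (Real.toNNReal (σ ^ 2 / 2)))
    (hindep : IndepFun X Y P) :
    P.map (fun ω => ‖μ + ((X ω : ℂ) + (Y ω : ℂ) * Complex.I)‖ ^ 2)
      = volume.withDensity
          (fun γ => if 0 < γ then
            ENNReal.ofReal ((1 / σ ^ 2) * Real.exp (-(γ + ‖μ‖ ^ 2) / σ ^ 2) *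
              besselI0 (2 * ‖μ‖ * Real.sqrt γ / σ ^ 2))
          else 0)
    ∧ ∀ γ : ℝ, 0 < γ →
        (1 / σ ^ 2) * Real.exp (-(γ + ‖μ‖ ^ 2) / σ ^ 2) *
            besselI0 (2 * ‖μ‖ * Real.sqrt γ / σ ^ 2)
          = fRice γ (‖μ‖ ^ 2 / σ ^ 2) (‖μ‖ ^ 2 + σ ^ 2) := by
  have hσ2 : (0:ℝ) < σ ^ 2 := by positivity
  set v : NNReal := Real.toNNReal (σ ^ 2 / 2) with hv
  have hvne : v ≠ 0 := by
    rw [hv, Ne, Real.toNNReal_eq_zero, not_le]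
    positivity
  have hvr : (v : ℝ) = σ ^ 2 / 2 := Real.coe_toNNReal _ (by positivity)
  have hvrpos : (0:ℝ) < (v : ℝ) := by rw [hvr]; positivity
  have hm2 : ‖μ‖ ^ 2 = μ.re ^ 2 + μ.im ^ 2 := by
    rw [Complex.sq_norm, Complex.normSq_apply]; ring
  have hmnn : 0 ≤ ‖μ‖ := norm_nonneg _
  constructor
  · -- the density statement
    set F : ℝ × ℝ → ℝ := fun p => (μ.re + p.1) ^ 2 + (μ.im + p.2) ^ 2 with hF
    have hFmeas : Measurable F := by fun_prop
    have hfun : (fun ω => ‖μ + ((X ω : ℂ) + (Y ω : ℂ) * Complex.I)‖ ^ 2)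
        = F ∘ (fun ω => (X ω, Y ω)) := by
      funext ω
      rw [Function.comp_apply, hF]
      rw [Complex.sq_norm, Complex.normSq_apply]
      simp
      ring
    have hpair : P.map (fun ω => (X ω, Y ω)) = (gaussianReal 0 v).prod (gaussianReal 0 v) := by
      have h := (indepFun_iff_map_prod_eq_prod_map_map hX.aemeasurable hY.aemeasurable).mp hindep
      rw [hlawX, hlawY] at h
      exact h
    rw [hfun, ← Measure.map_map hFmeas (hX.prodMk hY), hpair, gaussian_prod_eq v hvne]
    ext s hs
    rw [Measure.map_apply hFmeas hs, withDensity_apply _ (hFmeas hs), withDensity_apply _ hs]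
    have hkey := key_lintegral μ.re μ.im (v : ℝ) hvrpos s hs
    simp only [gaussianPDF_def, gaussianPDFReal] at *
    rw [hkey]
    refine setLIntegral_congr_fun hs (fun γ _ => ?_)
    by_cases h : 0 < γ
    · rw [Set.indicator_of_mem (Set.mem_Ioi.2 h), if_pos h]
      congr 1
      have h2v : 2 * (v:ℝ) = σ ^ 2 := by rw [hvr]; ring
      have hsq : Real.sqrt (μ.re ^ 2 + μ.im ^ 2) = ‖μ‖ := by
        rw [← hm2, Real.sqrt_sq hmnn]
      rw [h2v, hsq, ← hm2]
      have harg : ‖μ‖ * Real.sqrt γ / (v:ℝ)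
          = 2 * ‖μ‖ * Real.sqrt γ / σ ^ 2 := by
        rw [← h2v]; ring
      rw [harg]
      congr 1
      rw [one_div]
    · rw [Set.indicator_of_notMem (by simpa using h), if_neg h]
  · -- the fRice identification
    intro γ hγ
    set m : ℝ := ‖μ‖ with hm
    set K : ℝ := m ^ 2 / σ ^ 2 with hK
    set γbar : ℝ := m ^ 2 + σ ^ 2 with hγbar
    have hγbarpos : 0 < γbar := by rw [hγbar]; positivity
    have e1 : (1 + K) / γbar = 1 / σ ^ 2 := by
      rw [hK, hγbar]; field_simp; ring
    have e2 : Real.exp (-K) * Real.exp (-(1 + K) * γ / γbar) = Real.exp (-(γ + m ^ 2) / σ ^ 2) := by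
      rw [← Real.exp_add]
      congr 1
      rw [hK, hγbar]
      field_simp
      ring
    have e3 : 2 * Real.sqrt (K * (1 + K) * γ / γbar) = 2 * m * Real.sqrt γ / σ ^ 2 := by
      have harg : K * (1 + K) * γ / γbar = (m * Real.sqrt γ / σ ^ 2) ^ 2 := by
        rw [hK, hγbar, div_pow, mul_pow, Real.sq_sqrt hγ.le]
        field_simp
        ring
      rw [harg, Real.sqrt_sq (by positivity)]
      ring
    rw [fRice, e1, e3, mul_assoc (1 / σ ^ 2) (Real.exp (-K)), e2]
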